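/- The set BMO_ℝ^*(ℝ) of all real-valued BMO functions u on ℝ such that e^u is an A_∞-weight is convex: if u₁ and u₂ are real-valued BMO functions with e^{u₁} and e^{u₂} A_∞-weights and t ∈ [0,1], then e^{(1−t)u₁ + t u₂} is an A_∞-weight. -/

import Mathlib

open MeasureTheory Set Filter Topology
open scoped ENNReal NNReal

noncomputable section

/-- The average of `u` over the interval from `a` to `b`. -/
noncomputable def intervalAvg {E : Type*} [NormedAddCommGroup E] [NormedSpace ℝ E]
    (u : ℝ → E) (a b : ℝ) : E :=
  (b - a)⁻¹ • ∫ x in a..b, u x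

/-- The BMO seminorm `‖u‖_* = sup_I (1/|I|) ∫_I ‖u - u_I‖`, valued in `ℝ≥0∞`. -/
noncomputable def bmoSeminorm {E : Type*} [NormedAddCommGroup E] [NormedSpace ℝ E]
    (u : ℝ → E) : ℝ≥0∞ :=
  ⨆ (a : ℝ) (b : ℝ) (_ : a < b),
    ENNReal.ofReal ((b - a)⁻¹ * ∫ x in a..b, ‖u x - intervalAvg u a b‖)

/-- `u` is a BMO function: locally integrable with finite BMO seminorm. -/
def IsBMO {E : Type*} [NormedAddCommGroup E] [NormedSpace ℝ E] (u : ℝ → E) : Prop :=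
  LocallyIntegrable u volume ∧ bmoSeminorm u < ⊤

/-- `ω` is an `A_p`-weight of Muckenhoupt on `ℝ` (`p > 1`). -/
def IsApWeight (ω : ℝ → ℝ) (p : ℝ) : Prop :=
  (∀ x, 0 ≤ ω x) ∧ LocallyIntegrable ω volume ∧
    LocallyIntegrable (fun x => (1 / ω x) ^ (1 / (p - 1))) volume ∧
    ∃ C : ℝ, 1 ≤ C ∧ ∀ a b : ℝ, a < b →
      ((b - a)⁻¹ * ∫ x in a..b, ω x) *
        ((b - a)⁻¹ * ∫ x in a..b, (1 / ω x) ^ (1 / (p - 1))) ^ (p - 1) ≤ C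

/-- `ω` is an `A_∞`-weight: an `A_p`-weight for some `p > 1`. -/
def IsAInftyWeight (ω : ℝ → ℝ) : Prop :=
  ∃ p : ℝ, 1 < p ∧ IsApWeight ω p

/-- `ω` is an `A_1`-weight of Muckenhoupt on `ℝ`. -/
def IsA1Weight (ω : ℝ → ℝ) : Prop :=
  (∀ x, 0 ≤ ω x) ∧ LocallyIntegrable ω volume ∧
    ∃ C : ℝ, 1 ≤ C ∧ ∀ a b : ℝ, a < b →
      (b - a)⁻¹ * ∫ x in a..b, ω x ≤ C * essInf ω (volume.restrict (Set.Ioo a b))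

/-- `f` is locally absolutely continuous with derivative `f'`. -/
def IsLocAC {E : Type*} [NormedAddCommGroup E] [NormedSpace ℝ E] (f f' : ℝ → E) : Prop :=
  LocallyIntegrable f' volume ∧ ∀ a b : ℝ, a < b → f b - f a = ∫ t in a..b, f' t

/-- `f` is a strongly quasisymmetric homeomorphism of `ℝ` with derivative `f'`:
an increasing homeomorphism of `ℝ` onto itself, locally absolutely continuous,
whose derivative is an `A_∞`-weight. -/
def IsSQSWith (f f' : ℝ → ℝ) : Prop :=
  StrictMono f ∧ Function.Surjective f ∧ IsLocAC f f' ∧ IsAInftyWeight f'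

/-- `f` is a strongly quasisymmetric homeomorphism of `ℝ` onto itself. -/
def IsSQS (f : ℝ → ℝ) : Prop :=
  ∃ f', IsSQSWith f f'

/-- `γ_u(x) = ∫_0^x e^{u(t)} dt`. -/
noncomputable def gammaOf (u : ℝ → ℝ) (x : ℝ) : ℝ :=
  ∫ t in (0:ℝ)..x, Real.exp (u t)

end
private lemma exp_convex' {t a b : ℝ} (h0 : 0 ≤ t) (h1 : t ≤ 1) :
    Real.exp ((1 - t) * a + t * b) ≤ (1 - t) * Real.exp a + t * Real.exp b := by
  have key := Real.geom_mean_le_arith_mean2_weighted (by linarith : (0:ℝ) ≤ 1 - t) h0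
    (Real.exp_pos a).le (Real.exp_pos b).le (by ring)
  calc Real.exp ((1 - t) * a + t * b) = Real.exp a ^ (1 - t) * Real.exp b ^ t := by
        rw [Real.exp_add, mul_comm (1 - t) a, mul_comm t b, Real.exp_mul, Real.exp_mul]
    _ ≤ _ := key

private lemma rpow_le_one_add' {g r : ℝ} (hg : 0 ≤ g) (h0 : 0 ≤ r) (h1 : r ≤ 1) :
    g ^ r ≤ 1 + g := by
  rcases le_total g 1 with h | h
  · have := Real.rpow_le_one hg h h0; linarith
  · have h2 := Real.rpow_le_rpow_of_exponent_le h h1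
    rw [Real.rpow_one] at h2; linarith

private lemma real_holder {α : Type*} [MeasurableSpace α] (μ : Measure α) {F G : α → ℝ} {t : ℝ}
    (h0 : 0 < t) (h1 : t < 1) (hF : Integrable F μ) (hG : Integrable G μ)
    (hF0 : ∀ x, 0 ≤ F x) (hG0 : ∀ x, 0 ≤ G x) :
    ∫ x, F x ^ (1 - t) * G x ^ t ∂μ ≤ (∫ x, F x ∂μ) ^ (1 - t) * (∫ x, G x ∂μ) ^ t := by
  have ht0 : (0:ℝ) < 1 - t := by linarith
  have hP : AEStronglyMeasurable (fun x => F x ^ (1 - t) * G x ^ t) μ :=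
    ((hF.1.aemeasurable.pow aemeasurable_const).mul
      (hG.1.aemeasurable.pow aemeasurable_const)).aestronglyMeasurable
  have hprod : Integrable (fun x => F x ^ (1 - t) * G x ^ t) μ := by
    refine Integrable.mono' ((hF.const_mul (1 - t)).add (hG.const_mul t)) hP
      (Filter.Eventually.of_forall fun x => ?_)
    rw [Real.norm_of_nonneg (mul_nonneg (Real.rpow_nonneg (hF0 x) _) (Real.rpow_nonneg (hG0 x) _))]
    exact Real.geom_mean_le_arith_mean2_weighted ht0.le h0.le (hF0 x) (hG0 x) (by ring)
  have hpq : (1 / (1 - t)).HolderConjugate (1 / t) := by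
    refine ⟨?_, ?_, ?_⟩
    · rw [one_div, inv_inv, one_div, inv_inv, inv_one]; ring
    · positivity
    · positivity
  have key := ENNReal.lintegral_mul_le_Lp_mul_Lq μ hpq
    (f := fun x => ENNReal.ofReal (F x) ^ (1 - t)) (g := fun x => ENNReal.ofReal (G x) ^ t)
    ((hF.1.aemeasurable.ennreal_ofReal).pow aemeasurable_const)
    ((hG.1.aemeasurable.ennreal_ofReal).pow aemeasurable_const)
  have e1 : ∀ x : ℝ≥0∞, (x ^ (1 - t)) ^ (1 / (1 - t)) = x := fun x => by
    rw [← ENNReal.rpow_mul, mul_one_div_cancel ht0.ne', ENNReal.rpow_one]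
  have e2 : ∀ x : ℝ≥0∞, (x ^ t) ^ (1 / t) = x := fun x => by
    rw [← ENNReal.rpow_mul, mul_one_div_cancel h0.ne', ENNReal.rpow_one]
  simp only [Pi.mul_apply, e1, e2, one_div_one_div] at key
  have lhs_eq : ENNReal.ofReal (∫ x, F x ^ (1 - t) * G x ^ t ∂μ)
      = ∫⁻ x, ENNReal.ofReal (F x) ^ (1 - t) * ENNReal.ofReal (G x) ^ t ∂μ := by
    rw [MeasureTheory.ofReal_integral_eq_lintegral_ofReal hprod
      (Filter.Eventually.of_forall fun x =>
        mul_nonneg (Real.rpow_nonneg (hF0 x) _) (Real.rpow_nonneg (hG0 x) _))]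
    refine lintegral_congr fun x => ?_
    rw [ENNReal.ofReal_mul (Real.rpow_nonneg (hF0 x) _),
      ENNReal.ofReal_rpow_of_nonneg (hF0 x) ht0.le,
      ENNReal.ofReal_rpow_of_nonneg (hG0 x) h0.le]
  have hFI : ENNReal.ofReal (∫ x, F x ∂μ) = ∫⁻ x, ENNReal.ofReal (F x) ∂μ :=
    MeasureTheory.ofReal_integral_eq_lintegral_ofReal hF (Filter.Eventually.of_forall hF0)
  have hGI : ENNReal.ofReal (∫ x, G x ∂μ) = ∫⁻ x, ENNReal.ofReal (G x) ∂μ :=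
    MeasureTheory.ofReal_integral_eq_lintegral_ofReal hG (Filter.Eventually.of_forall hG0)
  have rhs_eq : ENNReal.ofReal ((∫ x, F x ∂μ) ^ (1 - t) * (∫ x, G x ∂μ) ^ t)
      = (∫⁻ x, ENNReal.ofReal (F x) ∂μ) ^ (1 - t) * (∫⁻ x, ENNReal.ofReal (G x) ∂μ) ^ t := by
    rw [← hFI, ← hGI, ENNReal.ofReal_rpow_of_nonneg (integral_nonneg hF0) ht0.le,
      ENNReal.ofReal_rpow_of_nonneg (integral_nonneg hG0) h0.le,
      ← ENNReal.ofReal_mul (Real.rpow_nonneg (integral_nonneg hF0) _)]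
  rw [← ENNReal.ofReal_le_ofReal_iff
    (mul_nonneg (Real.rpow_nonneg (integral_nonneg hF0) _) (Real.rpow_nonneg (integral_nonneg hG0) _)),
    lhs_eq, rhs_eq]
  exact key

private lemma real_power_mean {α : Type*} [MeasurableSpace α] (μ : Measure α) {G : α → ℝ} {r : ℝ}
    (h0 : 0 < r) (h1 : r ≤ 1) (hone : Integrable (fun _ => (1:ℝ)) μ)
    (hG : Integrable G μ) (hG0 : ∀ x, 0 ≤ G x) :
    ∫ x, G x ^ r ∂μ ≤ (∫ _x, (1:ℝ) ∂μ) ^ (1 - r) * (∫ x, G x ∂μ) ^ r := by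
  rcases eq_or_lt_of_le h1 with h1 | h1
  · subst h1
    simp [Real.rpow_one]
  · have key := real_holder μ h0 h1 hone hG (fun _ => zero_le_one) hG0
    simpa [Real.one_rpow] using key

set_option maxHeartbeats 1000000 in
/-- `BMO_ℝ^*(ℝ)` is convex: if `u₁, u₂` are real-valued BMO functions with
`e^{u₁}`, `e^{u₂}` `A_∞`-weights and `t ∈ [0,1]`, then `e^{(1-t)u₁ + t u₂}` is an `A_∞`-weight. -/
theorem statement2 (u₁ u₂ : ℝ → ℝ) (h₁ : IsBMO u₁) (h₂ : IsBMO u₂)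
    (hA₁ : IsAInftyWeight fun x => Real.exp (u₁ x))
    (hA₂ : IsAInftyWeight fun x => Real.exp (u₂ x))
    (t : ℝ) (ht0 : 0 ≤ t) (ht1 : t ≤ 1) :
    IsAInftyWeight (fun x => Real.exp ((1 - t) * u₁ x + t * u₂ x)) := by
  rcases eq_or_lt_of_le ht0 with rfl | ht0'
  · simpa using hA₁
  rcases eq_or_lt_of_le ht1 with rfl | ht1'
  · simpa using hA₂
  obtain ⟨p₁, hp₁, _, hli₁, hli₁', C₁, hC₁, hineq₁⟩ := hA₁
  obtain ⟨p₂, hp₂, _, hli₂, hli₂', C₂, hC₂, hineq₂⟩ := hA₂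
  have hu₁m : AEMeasurable u₁ volume := h₁.1.aestronglyMeasurable.aemeasurable
  have hu₂m : AEMeasurable u₂ volume := h₂.1.aestronglyMeasurable.aemeasurable
  set p : ℝ := max p₁ p₂ with hpdef
  have hpge₁ : p₁ ≤ p := by rw [hpdef]; exact le_max_left p₁ p₂
  have hpge₂ : p₂ ≤ p := by rw [hpdef]; exact le_max_right p₁ p₂
  have hp : 1 < p := lt_of_lt_of_le hp₁ hpge₁
  have hp1 : (0:ℝ) < p - 1 := by linarith
  have hp₁1 : (0:ℝ) < p₁ - 1 := by linarith
  have hp₂1 : (0:ℝ) < p₂ - 1 := by linarith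
  set r₁ : ℝ := (p₁ - 1) / (p - 1) with hr₁def
  set r₂ : ℝ := (p₂ - 1) / (p - 1) with hr₂def
  have hr₁0 : 0 < r₁ := div_pos hp₁1 hp1
  have hr₂0 : 0 < r₂ := div_pos hp₂1 hp1
  have hr₁1 : r₁ ≤ 1 := (div_le_one hp1).2 (by linarith)
  have hr₂1 : r₂ ≤ 1 := (div_le_one hp1).2 (by linarith)
  have hr₁q : r₁ * (p - 1) = p₁ - 1 := by rw [hr₁def, div_mul_cancel₀ _ hp1.ne']
  have hr₂q : r₂ * (p - 1) = p₂ - 1 := by rw [hr₂def, div_mul_cancel₀ _ hp1.ne']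
  have inv_exp_rpow : ∀ z s : ℝ, (1 / Real.exp z) ^ s = Real.exp (-z * s) := fun z s => by
    rw [one_div, ← Real.exp_neg, ← Real.exp_mul]
  have hE₁ : (fun x => (1 / Real.exp (u₁ x)) ^ (1 / (p₁ - 1)))
      = fun x => Real.exp (-u₁ x * (1 / (p₁ - 1))) := funext fun x => inv_exp_rpow _ _
  have hE₂ : (fun x => (1 / Real.exp (u₂ x)) ^ (1 / (p₂ - 1)))
      = fun x => Real.exp (-u₂ x * (1 / (p₂ - 1))) := funext fun x => inv_exp_rpow _ _
  rw [hE₁] at hli₁'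
  rw [hE₂] at hli₂'
  have hpow₁ : ∀ x, Real.exp (-u₁ x * (1 / (p - 1)))
      = Real.exp (-u₁ x * (1 / (p₁ - 1))) ^ r₁ := fun x => by
    rw [← Real.exp_mul]
    congr 1
    rw [hr₁def]
    field_simp
  have hpow₂ : ∀ x, Real.exp (-u₂ x * (1 / (p - 1)))
      = Real.exp (-u₂ x * (1 / (p₂ - 1))) ^ r₂ := fun x => by
    rw [← Real.exp_mul]
    congr 1
    rw [hr₂def]
    field_simp
  have hli₁'' : LocallyIntegrable (fun x => Real.exp (-u₁ x * (1 / (p - 1)))) volume := by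
    refine LocallyIntegrable.mono
      ((locallyIntegrable_const (1:ℝ)).add hli₁')
      (Real.measurable_exp.comp_aemeasurable
        ((hu₁m.neg).mul_const _)).aestronglyMeasurable
      (Filter.Eventually.of_forall fun x => ?_)
    rw [Real.norm_of_nonneg (Real.exp_pos _).le, hpow₁ x]
    simp only [Pi.add_apply]
    rw [Real.norm_of_nonneg (by positivity)]
    exact rpow_le_one_add' (Real.exp_pos _).le hr₁0.le hr₁1
  have hli₂'' : LocallyIntegrable (fun x => Real.exp (-u₂ x * (1 / (p - 1)))) volume := by
    refine LocallyIntegrable.mono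
      ((locallyIntegrable_const (1:ℝ)).add hli₂')
      (Real.measurable_exp.comp_aemeasurable
        ((hu₂m.neg).mul_const _)).aestronglyMeasurable
      (Filter.Eventually.of_forall fun x => ?_)
    rw [Real.norm_of_nonneg (Real.exp_pos _).le, hpow₂ x]
    simp only [Pi.add_apply]
    rw [Real.norm_of_nonneg (by positivity)]
    exact rpow_le_one_add' (Real.exp_pos _).le hr₂0.le hr₂1
  refine ⟨p, hp, fun x => (Real.exp_pos _).le, ?_, ?_, ?_⟩
  · refine LocallyIntegrable.mono ((hli₁.smul ((1:ℝ) - t)).add (hli₂.smul t))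
      (Real.measurable_exp.comp_aemeasurable
        ((hu₁m.const_mul _).add (hu₂m.const_mul _))).aestronglyMeasurable
      (Filter.Eventually.of_forall fun x => ?_)
    rw [Real.norm_of_nonneg (Real.exp_pos _).le]
    have hb : (0:ℝ) ≤ (1 - t) * Real.exp (u₁ x) + t * Real.exp (u₂ x) :=
      add_nonneg (mul_nonneg (by linarith) (Real.exp_pos _).le)
        (mul_nonneg ht0 (Real.exp_pos _).le)
    calc Real.exp ((1 - t) * u₁ x + t * u₂ x)
        ≤ (1 - t) * Real.exp (u₁ x) + t * Real.exp (u₂ x) := exp_convex' ht0 ht1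
      _ ≤ ‖(((1:ℝ) - t) • (fun x => Real.exp (u₁ x)) + t • fun x => Real.exp (u₂ x)) x‖ := by
          simp only [Pi.add_apply, Pi.smul_apply, smul_eq_mul]
          rw [Real.norm_of_nonneg hb]
  · rw [show (fun x => (1 / Real.exp ((1 - t) * u₁ x + t * u₂ x)) ^ (1 / (p - 1)))
        = fun x => Real.exp (-((1 - t) * u₁ x + t * u₂ x) * (1 / (p - 1)))
      from funext fun x => inv_exp_rpow _ _]
    have hrw : ∀ x : ℝ, -((1 - t) * u₁ x + t * u₂ x) * (1 / (p - 1))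
        = (1 - t) * (-u₁ x * (1 / (p - 1))) + t * (-u₂ x * (1 / (p - 1))) := fun x => by ring
    refine LocallyIntegrable.mono ((hli₁''.smul ((1:ℝ) - t)).add (hli₂''.smul t))
      (Real.measurable_exp.comp_aemeasurable
        (((hu₁m.const_mul _).add (hu₂m.const_mul _)).neg.mul_const _)).aestronglyMeasurable
      (Filter.Eventually.of_forall fun x => ?_)
    rw [Real.norm_of_nonneg (Real.exp_pos _).le, hrw x]
    have hb : (0:ℝ) ≤ (1 - t) * Real.exp (-u₁ x * (1 / (p - 1)))
        + t * Real.exp (-u₂ x * (1 / (p - 1))) :=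
      add_nonneg (mul_nonneg (by linarith) (Real.exp_pos _).le)
        (mul_nonneg ht0 (Real.exp_pos _).le)
    calc Real.exp ((1 - t) * (-u₁ x * (1 / (p - 1))) + t * (-u₂ x * (1 / (p - 1))))
        ≤ (1 - t) * Real.exp (-u₁ x * (1 / (p - 1)))
          + t * Real.exp (-u₂ x * (1 / (p - 1))) := exp_convex' ht0 ht1
      _ ≤ _ := by
          simp only [Pi.add_apply, Pi.smul_apply, smul_eq_mul]
          rw [Real.norm_of_nonneg hb]
  · refine ⟨C₁ * C₂, by nlinarith, ?_⟩
    intro a b hab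
    have hL : (0:ℝ) < b - a := by linarith
    have hLinv : (0:ℝ) < (b - a)⁻¹ := inv_pos.2 hL
    have h1 := hineq₁ a b hab
    have h2 := hineq₂ a b hab
    simp only [intervalIntegral.integral_of_le hab.le, inv_exp_rpow] at h1 h2 ⊢
    set μ : Measure ℝ := volume.restrict (Ioc a b) with hμdef
    have hIoc : ∀ {f : ℝ → ℝ}, LocallyIntegrable f volume → Integrable f μ := fun hf =>
      (hf.integrableOn_isCompact isCompact_Icc).mono_set Ioc_subset_Icc_self
    have hone : Integrable (fun _ => (1:ℝ)) μ := by
      rw [hμdef]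
      exact integrableOn_const measure_Ioc_lt_top.ne
    have hone_int : ∫ _x, (1:ℝ) ∂μ = b - a := by
      simp [hμdef, Real.volume_Ioc, ENNReal.toReal_ofReal hL.le, hab.le]
    have hi₁ : Integrable (fun x => Real.exp (u₁ x)) μ := hIoc hli₁
    have hi₂ : Integrable (fun x => Real.exp (u₂ x)) μ := hIoc hli₂
    have hg₁ : Integrable (fun x => Real.exp (-u₁ x * (1 / (p₁ - 1)))) μ := hIoc hli₁'
    have hg₂ : Integrable (fun x => Real.exp (-u₂ x * (1 / (p₂ - 1)))) μ := hIoc hli₂'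
    have hg₁' : Integrable (fun x => Real.exp (-u₁ x * (1 / (p - 1)))) μ := hIoc hli₁''
    have hg₂' : Integrable (fun x => Real.exp (-u₂ x * (1 / (p - 1)))) μ := hIoc hli₂''
    set A : ℝ := ∫ x, Real.exp ((1 - t) * u₁ x + t * u₂ x) ∂μ with hAdef
    set B : ℝ := ∫ x, Real.exp (-((1 - t) * u₁ x + t * u₂ x) * (1 / (p - 1))) ∂μ with hBdef
    set A1 : ℝ := ∫ x, Real.exp (u₁ x) ∂μ with hA1def
    set A2 : ℝ := ∫ x, Real.exp (u₂ x) ∂μ with hA2def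
    set B1 : ℝ := ∫ x, Real.exp (-u₁ x * (1 / (p₁ - 1))) ∂μ with hB1def
    set B2 : ℝ := ∫ x, Real.exp (-u₂ x * (1 / (p₂ - 1))) ∂μ with hB2def
    set D1 : ℝ := ∫ x, Real.exp (-u₁ x * (1 / (p - 1))) ∂μ with hD1def
    set D2 : ℝ := ∫ x, Real.exp (-u₂ x * (1 / (p - 1))) ∂μ with hD2def
    have hA1n : 0 ≤ A1 := integral_nonneg fun _ => (Real.exp_pos _).le
    have hA2n : 0 ≤ A2 := integral_nonneg fun _ => (Real.exp_pos _).le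
    have hB1n : 0 ≤ B1 := integral_nonneg fun _ => (Real.exp_pos _).le
    have hB2n : 0 ≤ B2 := integral_nonneg fun _ => (Real.exp_pos _).le
    have hD1n : 0 ≤ D1 := integral_nonneg fun _ => (Real.exp_pos _).le
    have hD2n : 0 ≤ D2 := integral_nonneg fun _ => (Real.exp_pos _).le
    have hAn : 0 ≤ A := integral_nonneg fun _ => (Real.exp_pos _).le
    have hBn : 0 ≤ B := integral_nonneg fun _ => (Real.exp_pos _).le
    have stepA : A ≤ A1 ^ (1 - t) * A2 ^ t := by
      rw [hAdef, integral_congr_ae (Filter.Eventually.of_forall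
        (fun x => by
          rw [Real.exp_add, mul_comm (1 - t) (u₁ x), mul_comm t (u₂ x),
            Real.exp_mul, Real.exp_mul] :
          ∀ x, Real.exp ((1 - t) * u₁ x + t * u₂ x)
            = Real.exp (u₁ x) ^ (1 - t) * Real.exp (u₂ x) ^ t))]
      exact real_holder μ ht0' ht1' hi₁ hi₂
        (fun _ => (Real.exp_pos _).le) (fun _ => (Real.exp_pos _).le)
    have stepB : B ≤ D1 ^ (1 - t) * D2 ^ t := by
      rw [hBdef, integral_congr_ae (Filter.Eventually.of_forall
        (fun x => by
          rw [← Real.exp_mul, ← Real.exp_mul, ← Real.exp_add]; congr 1; ring :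
          ∀ x, Real.exp (-((1 - t) * u₁ x + t * u₂ x) * (1 / (p - 1)))
            = Real.exp (-u₁ x * (1 / (p - 1))) ^ (1 - t)
              * Real.exp (-u₂ x * (1 / (p - 1))) ^ t))]
      exact real_holder μ ht0' ht1' hg₁' hg₂'
        (fun _ => (Real.exp_pos _).le) (fun _ => (Real.exp_pos _).le)
    have stepP₁ : D1 ≤ (b - a) ^ (1 - r₁) * B1 ^ r₁ := by
      rw [hD1def, integral_congr_ae (Filter.Eventually.of_forall hpow₁)]
      have key := real_power_mean μ hr₁0 hr₁1 hone hg₁ (fun _ => (Real.exp_pos _).le)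
      rwa [hone_int] at key
    have stepP₂ : D2 ≤ (b - a) ^ (1 - r₂) * B2 ^ r₂ := by
      rw [hD2def, integral_congr_ae (Filter.Eventually.of_forall hpow₂)]
      have key := real_power_mean μ hr₂0 hr₂1 hone hg₂ (fun _ => (Real.exp_pos _).le)
      rwa [hone_int] at key
    have hLcol : ∀ r : ℝ, (b - a)⁻¹ * ((b - a) ^ (1 - r)) = ((b - a)⁻¹) ^ r := by
      intro r
      rw [show (b - a)⁻¹ = (b - a) ^ (-1 : ℝ) from (Real.rpow_neg_one _).symm]
      rw [← Real.rpow_add hL, ← Real.rpow_mul hL.le]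
      congr 1
      ring
    have hD1bound : (b - a)⁻¹ * D1 ≤ ((b - a)⁻¹ * B1) ^ r₁ := by
      calc (b - a)⁻¹ * D1 ≤ (b - a)⁻¹ * ((b - a) ^ (1 - r₁) * B1 ^ r₁) :=
            mul_le_mul_of_nonneg_left stepP₁ hLinv.le
        _ = ((b - a)⁻¹ * ((b - a) ^ (1 - r₁))) * B1 ^ r₁ := by ring
        _ = ((b - a)⁻¹) ^ r₁ * B1 ^ r₁ := by rw [hLcol]
        _ = ((b - a)⁻¹ * B1) ^ r₁ := (Real.mul_rpow hLinv.le hB1n).symm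
    have hD2bound : (b - a)⁻¹ * D2 ≤ ((b - a)⁻¹ * B2) ^ r₂ := by
      calc (b - a)⁻¹ * D2 ≤ (b - a)⁻¹ * ((b - a) ^ (1 - r₂) * B2 ^ r₂) :=
            mul_le_mul_of_nonneg_left stepP₂ hLinv.le
        _ = ((b - a)⁻¹ * ((b - a) ^ (1 - r₂))) * B2 ^ r₂ := by ring
        _ = ((b - a)⁻¹) ^ r₂ * B2 ^ r₂ := by rw [hLcol]
        _ = ((b - a)⁻¹ * B2) ^ r₂ := (Real.mul_rpow hLinv.le hB2n).symm
    have hLsplit : ((b - a)⁻¹ : ℝ) = ((b - a)⁻¹) ^ (1 - t) * ((b - a)⁻¹) ^ t := by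
      rw [← Real.rpow_add hLinv]
      norm_num
    have hAfull : (b - a)⁻¹ * A ≤ ((b - a)⁻¹ * A1) ^ (1 - t) * ((b - a)⁻¹ * A2) ^ t := by
      calc (b - a)⁻¹ * A ≤ (b - a)⁻¹ * (A1 ^ (1 - t) * A2 ^ t) :=
            mul_le_mul_of_nonneg_left stepA hLinv.le
        _ = (((b - a)⁻¹) ^ (1 - t) * ((b - a)⁻¹) ^ t) * (A1 ^ (1 - t) * A2 ^ t) := by
            rw [← hLsplit]
        _ = ((b - a)⁻¹ * A1) ^ (1 - t) * ((b - a)⁻¹ * A2) ^ t := by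
            rw [Real.mul_rpow hLinv.le hA1n, Real.mul_rpow hLinv.le hA2n]
            ring
    have hBfull : (b - a)⁻¹ * B
        ≤ (((b - a)⁻¹ * B1) ^ r₁) ^ (1 - t) * (((b - a)⁻¹ * B2) ^ r₂) ^ t := by
      calc (b - a)⁻¹ * B ≤ (b - a)⁻¹ * (D1 ^ (1 - t) * D2 ^ t) :=
            mul_le_mul_of_nonneg_left stepB hLinv.le
        _ = (((b - a)⁻¹) ^ (1 - t) * ((b - a)⁻¹) ^ t) * (D1 ^ (1 - t) * D2 ^ t) := by
            rw [← hLsplit]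
        _ = ((b - a)⁻¹ * D1) ^ (1 - t) * ((b - a)⁻¹ * D2) ^ t := by
            rw [Real.mul_rpow hLinv.le hD1n, Real.mul_rpow hLinv.le hD2n]
            ring
        _ ≤ (((b - a)⁻¹ * B1) ^ r₁) ^ (1 - t) * (((b - a)⁻¹ * B2) ^ r₂) ^ t :=
            mul_le_mul
              (Real.rpow_le_rpow (mul_nonneg hLinv.le hD1n) hD1bound (by linarith))
              (Real.rpow_le_rpow (mul_nonneg hLinv.le hD2n) hD2bound ht0'.le)
              (Real.rpow_nonneg (mul_nonneg hLinv.le hD2n) _)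
              (Real.rpow_nonneg (Real.rpow_nonneg (mul_nonneg hLinv.le hB1n) _) _)
    have collapse : ∀ (x : ℝ), 0 ≤ x → ∀ (r q s : ℝ), r * (p - 1) = q →
        ((x ^ r) ^ s) ^ (p - 1) = (x ^ q) ^ s := by
      intro x hx r q s hrq
      rw [← Real.rpow_mul hx, ← Real.rpow_mul hx, ← Real.rpow_mul hx]
      congr 1
      rw [← hrq]
      ring
    have hBpow : ((b - a)⁻¹ * B) ^ (p - 1)
        ≤ (((b - a)⁻¹ * B1) ^ (p₁ - 1)) ^ (1 - t) * (((b - a)⁻¹ * B2) ^ (p₂ - 1)) ^ t := by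
      calc ((b - a)⁻¹ * B) ^ (p - 1)
          ≤ ((((b - a)⁻¹ * B1) ^ r₁) ^ (1 - t) * (((b - a)⁻¹ * B2) ^ r₂) ^ t) ^ (p - 1) :=
            Real.rpow_le_rpow (mul_nonneg hLinv.le hBn) hBfull hp1.le
        _ = ((((b - a)⁻¹ * B1) ^ r₁) ^ (1 - t)) ^ (p - 1)
              * ((((b - a)⁻¹ * B2) ^ r₂) ^ t) ^ (p - 1) :=
            Real.mul_rpow (Real.rpow_nonneg (Real.rpow_nonneg (mul_nonneg hLinv.le hB1n) _) _)
              (Real.rpow_nonneg (Real.rpow_nonneg (mul_nonneg hLinv.le hB2n) _) _)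
        _ = (((b - a)⁻¹ * B1) ^ (p₁ - 1)) ^ (1 - t) * (((b - a)⁻¹ * B2) ^ (p₂ - 1)) ^ t := by
            rw [show ((((b - a)⁻¹ * B1) ^ r₁) ^ (1 - t)) ^ (p - 1)
                = (((b - a)⁻¹ * B1) ^ (p₁ - 1)) ^ (1 - t) from by
              rw [← Real.rpow_mul (mul_nonneg hLinv.le hB1n),
                ← Real.rpow_mul (mul_nonneg hLinv.le hB1n),
                ← Real.rpow_mul (mul_nonneg hLinv.le hB1n)]
              congr 1
              rw [← hr₁q]; ring]
            rw [show ((((b - a)⁻¹ * B2) ^ r₂) ^ t) ^ (p - 1)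
                = (((b - a)⁻¹ * B2) ^ (p₂ - 1)) ^ t from by
              rw [← Real.rpow_mul (mul_nonneg hLinv.le hB2n),
                ← Real.rpow_mul (mul_nonneg hLinv.le hB2n),
                ← Real.rpow_mul (mul_nonneg hLinv.le hB2n)]
              congr 1
              rw [← hr₂q]; ring]
    calc ((b - a)⁻¹ * A) * ((b - a)⁻¹ * B) ^ (p - 1)
        ≤ (((b - a)⁻¹ * A1) ^ (1 - t) * ((b - a)⁻¹ * A2) ^ t)
            * ((((b - a)⁻¹ * B1) ^ (p₁ - 1)) ^ (1 - t) * (((b - a)⁻¹ * B2) ^ (p₂ - 1)) ^ t) :=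
          mul_le_mul hAfull hBpow
            (Real.rpow_nonneg (mul_nonneg hLinv.le hBn) _)
            (mul_nonneg (Real.rpow_nonneg (mul_nonneg hLinv.le hA1n) _)
              (Real.rpow_nonneg (mul_nonneg hLinv.le hA2n) _))
      _ = (((b - a)⁻¹ * A1) * ((b - a)⁻¹ * B1) ^ (p₁ - 1)) ^ (1 - t)
            * (((b - a)⁻¹ * A2) * ((b - a)⁻¹ * B2) ^ (p₂ - 1)) ^ t := by
          rw [Real.mul_rpow (mul_nonneg hLinv.le hA1n)
              (Real.rpow_nonneg (mul_nonneg hLinv.le hB1n) _),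
            Real.mul_rpow (mul_nonneg hLinv.le hA2n)
              (Real.rpow_nonneg (mul_nonneg hLinv.le hB2n) _)]
          ring
      _ ≤ C₁ ^ (1 - t) * C₂ ^ t :=
          mul_le_mul
            (Real.rpow_le_rpow (mul_nonneg (mul_nonneg hLinv.le hA1n)
              (Real.rpow_nonneg (mul_nonneg hLinv.le hB1n) _)) h1 (by linarith))
            (Real.rpow_le_rpow (mul_nonneg (mul_nonneg hLinv.le hA2n)
              (Real.rpow_nonneg (mul_nonneg hLinv.le hB2n) _)) h2 ht0'.le)
            (Real.rpow_nonneg (mul_nonneg (mul_nonneg hLinv.le hA2n)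
              (Real.rpow_nonneg (mul_nonneg hLinv.le hB2n) _)) _)
            (Real.rpow_nonneg (by linarith : (0:ℝ) ≤ C₁) _)
      _ ≤ C₁ * C₂ := by
          have e1 : C₁ ^ (1 - t) ≤ C₁ := by
            nth_rewrite 2 [← Real.rpow_one C₁]
            exact Real.rpow_le_rpow_of_exponent_le hC₁ (by linarith)
          have e2 : C₂ ^ t ≤ C₂ := by
            nth_rewrite 2 [← Real.rpow_one C₂]
            exact Real.rpow_le_rpow_of_exponent_le hC₂ (by linarith)
          have q2 : (0:ℝ) < C₂ ^ t := Real.rpow_pos_of_pos (by linarith) _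
          exact mul_le_mul e1 e2 q2.le (by linarith)
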